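/- The two quaternions 1 + j + k and 1 + j − k freely generate a free subgroup of rank 2 of the group of units of ℍ(ℚ): the homomorphism from the free group on two generators to the units of ℍ(ℚ) sending the generators to 1 + j + k and 1 + j − k is injective. -/

import Mathlib

open Quaternion List

namespace QFreeAux

abbrev R3 := ZMod 3
abbrev F := Fin 2 × Bool

instance : DecidableEq (Quaternion R3) := fun a b =>
  decidable_of_iff (a.re = b.re ∧ a.imI = b.imI ∧ a.imJ = b.imJ ∧ a.imK = b.imK)
    QuaternionAlgebra.ext_iff.symm

def uu (x : F) : Fin 2 → R3 :=
  if x.1 = 0 then (if x.2 then ![1,2] else ![1,1]) else (if x.2 then ![0,1] else ![1,0])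

def vv (x : F) : Fin 2 → R3 :=
  if x.1 = 0 then (if x.2 then ![1,2] else ![1,1]) else (if x.2 then ![0,2] else ![2,0])

def E (x y : F) : Quaternion R3 :=
  let p := uu x 0 * vv y 0
  let q := uu x 0 * vv y 1
  let r := uu x 1 * vv y 0
  let s := uu x 1 * vv y 1
  ⟨2*(p+s), 2*(r-q), p+q+r-s, -p+q+r+s⟩

def dd (x y : F) : R3 := vv x 0 * uu y 0 + vv x 1 * uu y 1

def q3 (x : F) : Quaternion R3 := E x x

lemma key1 : ∀ x y z : F, q3 x * E y z = dd x y • E x z := by decide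

lemma key2 : ∀ x y : F, (x.1 = y.1 → x.2 = y.2) → dd x y ≠ 0 := by decide

lemma key3 : ∀ (c : R3) (x y : F), c ≠ 0 → c • E x y ≠ 0 := by decide

lemma key4 : ∀ (c : R3) (x y : F), c • E x y ≠ 1 := by decide

def Ok (x y : F) : Prop := x.1 = y.1 → x.2 = y.2

lemma prod_eq : ∀ (L : List F) (x : F), List.Chain' Ok (x :: L) →
    ∃ c : R3, c ≠ 0 ∧ ((x :: L).map q3).prod
      = c • E x ((x :: L).getLast (List.cons_ne_nil _ _)) := by
  intro L
  induction L with
  | nil => intro x _; exact ⟨1, one_ne_zero, by simp [q3]⟩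
  | cons y L ih =>
    intro x hch
    replace hch := List.isChain_cons_cons.mp hch
    obtain ⟨c, hc, hp⟩ := ih y hch.2
    refine ⟨c * dd x y, mul_ne_zero hc (key2 x y hch.1), ?_⟩
    have h1 : ((x :: y :: L).map q3).prod = q3 x * ((y :: L).map q3).prod := by simp
    rw [h1, hp, mul_smul_comm, key1, List.getLast_cons (List.cons_ne_nil _ _),
      smul_smul, mul_comm]

lemma bad_decomp : ∀ L : List F, ¬ List.Chain' Ok L →
    ∃ (L₂ : List F) (x : Fin 2) (b : Bool) (L₃ : List F),
      L = L₂ ++ (x, b) :: (x, !b) :: L₃ := by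
  intro L
  induction L with
  | nil => intro h; exact absurd List.isChain_nil h
  | cons a L ih =>
    intro h
    cases L with
    | nil => exact absurd (List.isChain_singleton a) h
    | cons b t =>
      replace h : ¬ (Ok a b ∧ List.Chain' Ok (b :: t)) := fun hc => h (List.isChain_cons_cons.mpr hc)
      by_cases hok : Ok a b
      · obtain ⟨L₂, x, bb, L₃, hL⟩ := ih fun hc => h ⟨hok, hc⟩
        exact ⟨a :: L₂, x, bb, L₃, by rw [hL]; rfl⟩
      · unfold Ok at hok
        push_neg at hok
        obtain ⟨h1, h2⟩ := hok
        have hb : b = (a.1, !a.2) := by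
          have hb2 : b.2 = !a.2 := by
            cases hx : b.2 <;> cases hy : a.2 <;> simp_all
          calc b = (b.1, b.2) := rfl
          _ = (a.1, !a.2) := by rw [← h1, hb2]
        exact ⟨[], a.1, a.2, t, by rw [hb]; rfl⟩

lemma chain'_of_reduced (L : List F) (h : FreeGroup.reduce L = L) :
    List.Chain' Ok L := by
  by_contra hc
  obtain ⟨L₂, x, b, L₃, hL⟩ := bad_decomp L hc
  exact FreeGroup.reduce.not (h.trans hL)

/-- A quaternion given by its four components, typed as `Quaternion R`. -/
def qmk {R : Type*} [Zero R] [One R] [Neg R] (a b c d : R) : Quaternion R := ⟨a, b, c, d⟩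

@[simp] lemma qmk_re {R : Type*} [Zero R] [One R] [Neg R] (a b c d : R) :
    (qmk a b c d).re = a := rfl
@[simp] lemma qmk_imI {R : Type*} [Zero R] [One R] [Neg R] (a b c d : R) :
    (qmk a b c d).imI = b := rfl
@[simp] lemma qmk_imJ {R : Type*} [Zero R] [One R] [Neg R] (a b c d : R) :
    (qmk a b c d).imJ = c := rfl
@[simp] lemma qmk_imK {R : Type*} [Zero R] [One R] [Neg R] (a b c d : R) :
    (qmk a b c d).imK = d := rfl

/-- Componentwise ring hom between quaternion algebras. -/
def qmap {R S : Type*} [CommRing R] [CommRing S] (f : R →+* S) :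
    Quaternion R →+* Quaternion S where
  toFun a := qmk (f a.re) (f a.imI) (f a.imJ) (f a.imK)
  map_one' := by ext <;> simp
  map_mul' a b := by
    ext <;> simp [Quaternion.re_mul, Quaternion.imI_mul, Quaternion.imJ_mul,
      Quaternion.imK_mul]
  map_zero' := by ext <;> simp
  map_add' a b := by ext <;> simp

@[simp] lemma qmap_re {R S : Type*} [CommRing R] [CommRing S] (f : R →+* S)
    (a : Quaternion R) : (qmap f a).re = f a.re := rfl
@[simp] lemma qmap_imI {R S : Type*} [CommRing R] [CommRing S] (f : R →+* S)
    (a : Quaternion R) : (qmap f a).imI = f a.imI := rfl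
@[simp] lemma qmap_imJ {R S : Type*} [CommRing R] [CommRing S] (f : R →+* S)
    (a : Quaternion R) : (qmap f a).imJ = f a.imJ := rfl
@[simp] lemma qmap_imK {R S : Type*} [CommRing R] [CommRing S] (f : R →+* S)
    (a : Quaternion R) : (qmap f a).imK = f a.imK := rfl

lemma qmap_injective {R S : Type*} [CommRing R] [CommRing S] {f : R →+* S}
    (hf : Function.Injective f) : Function.Injective (qmap f) := by
  intro a b h
  ext
  · exact hf (congrArg QuaternionAlgebra.re h)
  · exact hf (congrArg QuaternionAlgebra.imI h)
  · exact hf (congrArg QuaternionAlgebra.imJ h)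
  · exact hf (congrArg QuaternionAlgebra.imK h)

def qZ (x : F) : Quaternion ℤ :=
  if x.1 = 0 then (if x.2 then qmk 1 0 1 1 else qmk 1 0 (-1) (-1))
  else (if x.2 then qmk 1 0 1 (-1) else qmk 1 0 (-1) 1)

noncomputable def τ : Quaternion ℤ →+* Quaternion ℚ := qmap (Int.castRingHom ℚ)

def σ3 : Quaternion ℤ →+* Quaternion R3 := qmap (Int.castRingHom R3)

lemma σ3_qZ : ∀ x : F, σ3 (qZ x) = q3 x := by decide

lemma τ_injective : Function.Injective τ :=
  qmap_injective Int.cast_injective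

end QFreeAux

open QFreeAux

/-- The quaternions `1 + j + k` and `1 + j − k` freely generate
a free subgroup of rank 2 of the units of `ℍ(ℚ)`. -/
theorem one_add_j_add_k_one_add_j_sub_k_free :
    Function.Injective
      (FreeGroup.lift
        (![Units.mk0 (⟨1, 0, 1, 1⟩ : Quaternion ℚ)
            (fun h => one_ne_zero (α := ℚ) (congrArg QuaternionAlgebra.re h)),
           Units.mk0 (⟨1, 0, 1, -1⟩ : Quaternion ℚ)
            (fun h => one_ne_zero (α := ℚ) (congrArg QuaternionAlgebra.re h))] :
          Fin 2 → (Quaternion ℚ)ˣ)) := by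
  set fu : Fin 2 → (Quaternion ℚ)ˣ :=
    (![Units.mk0 (⟨1, 0, 1, 1⟩ : Quaternion ℚ)
        (fun h => one_ne_zero (α := ℚ) (congrArg QuaternionAlgebra.re h)),
       Units.mk0 (⟨1, 0, 1, -1⟩ : Quaternion ℚ)
        (fun h => one_ne_zero (α := ℚ) (congrArg QuaternionAlgebra.re h))] : Fin 2 → (Quaternion ℚ)ˣ) with hfu
  have hA : ((fu 0 : (Quaternion ℚ)ˣ) : Quaternion ℚ) = qmk 1 0 1 1 := by rw [hfu]; rfl
  have hB : ((fu 1 : (Quaternion ℚ)ˣ) : Quaternion ℚ) = qmk 1 0 1 (-1) := by rw [hfu]; rfl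
  have hinv : ∀ q : Quaternion ℚ, normSq q = 3 → (3:ℚ) • q⁻¹ = star q := by
    intro q h3
    rw [Quaternion.inv_def, h3, smul_smul]
    norm_num
  have hval : ∀ x : F, τ (qZ x) = (3:ℚ) ^ (cond x.2 0 1) •
      ((cond x.2 (fu x.1) (fu x.1)⁻¹ : (Quaternion ℚ)ˣ) : Quaternion ℚ) := by
    rintro ⟨i, b⟩
    fin_cases i <;> cases b <;>
      simp only [cond_true, cond_false, pow_zero, pow_one, one_smul,
        Units.val_inv_eq_inv_val]
    · rw [show ((fu ⟨0, by norm_num⟩ : (Quaternion ℚ)ˣ) : Quaternion ℚ) = qmk 1 0 1 1 from hA,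
        hinv _ (by norm_num [Quaternion.normSq_def'])]
      ext <;> simp [τ, qZ]
    · rw [show ((fu ⟨0, by norm_num⟩ : (Quaternion ℚ)ˣ) : Quaternion ℚ) = qmk 1 0 1 1 from hA]
      ext <;> simp [τ, qZ]
    · rw [show ((fu ⟨1, by norm_num⟩ : (Quaternion ℚ)ˣ) : Quaternion ℚ) = qmk 1 0 1 (-1) from hB,
        hinv _ (by norm_num [Quaternion.normSq_def'])]
      ext <;> simp [τ, qZ]
    · rw [show ((fu ⟨1, by norm_num⟩ : (Quaternion ℚ)ˣ) : Quaternion ℚ) = qmk 1 0 1 (-1) from hB]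
      ext <;> simp [τ, qZ]
  have transfer : ∀ L : List F, ∃ m : ℕ,
      (L.map (fun x => τ (qZ x))).prod = (3:ℚ) ^ m •
        (((L.map (fun x => cond x.2 (fu x.1) (fu x.1)⁻¹)).prod :
          (Quaternion ℚ)ˣ) : Quaternion ℚ) := by
    intro L
    induction L with
    | nil => exact ⟨0, by simp⟩
    | cons x L ih =>
      obtain ⟨m, hm⟩ := ih
      refine ⟨(cond x.2 0 1) + m, ?_⟩
      simp only [List.map_cons, List.prod_cons, Units.val_mul, hm, hval x]
      rw [smul_mul_smul_comm, pow_add]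
  rw [injective_iff_map_eq_one]
  intro w hw
  by_contra hne
  have hLne : w.toWord ≠ [] := fun h => hne (FreeGroup.toWord_eq_nil_iff.mp h)
  have hchain : List.Chain' Ok w.toWord :=
    chain'_of_reduced _ (FreeGroup.reduce_toWord w)
  have hprod : ((w.toWord.map (fun x => cond x.2 (fu x.1) (fu x.1)⁻¹)).prod :
      (Quaternion ℚ)ˣ) = 1 := by
    have h1 := FreeGroup.lift_mk (f := fu) (L := w.toWord)
    rw [FreeGroup.mk_toWord] at h1
    rw [← h1, hw]
  obtain ⟨m, hm⟩ := transfer w.toWord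
  rw [hprod] at hm
  have hτ : τ ((w.toWord.map qZ).prod) = τ ((3 : Quaternion ℤ) ^ m) := by
    rw [map_list_prod, List.map_map, map_pow]
    rw [show (⇑τ ∘ qZ) = (fun x => τ (qZ x)) from rfl, hm]
    rw [Units.val_one, ← Algebra.algebraMap_eq_smul_one, map_pow, map_ofNat, map_ofNat]
  have hZ : (w.toWord.map qZ).prod = (3 : Quaternion ℤ) ^ m := τ_injective hτ
  have h3 : (w.toWord.map q3).prod = (3 : Quaternion R3) ^ m := by
    have h2 := congrArg σ3 hZ
    rw [map_list_prod, List.map_map, map_pow] at h2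
    rw [show w.toWord.map q3 = w.toWord.map (⇑σ3 ∘ qZ) from by
        simp [Function.comp_def, σ3_qZ], h2]
    rw [show σ3 3 = 3 from map_ofNat σ3 3]
  cases hL : w.toWord with
  | nil => exact hLne hL
  | cons x L' =>
    rw [hL] at hchain h3
    obtain ⟨c, hc, hE⟩ := prod_eq L' x hchain
    rw [hE] at h3
    cases m with
    | zero => rw [pow_zero] at h3; exact key4 c x _ h3
    | succ m =>
      have h30 : (3 : Quaternion R3) = 0 := by decide
      rw [h30, zero_pow (Nat.succ_ne_zero m)] at h3
      exact key3 c x _ hc h3
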